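/- In ℝ^r with the standard inner product, let Δ = BC_r = {±e_i, ±2e_i : 1 ≤ i ≤ r} ∪ {±e_i ± e_j : 1 ≤ i < j ≤ r}, with fundamental system Π = {α_i = e_i − e_{i+1} : 1 ≤ i ≤ r−1} ∪ {α_r = e_r}, and let α^l ∈ ℝ^r be determined by ⟨α^l, α_j⟩ = δ_{lj}. Then for every 1 ≤ l ≤ r, with Y = (π/2)α^l, Σ_Y = {±2e_i : 1 ≤ i ≤ r} ∪ {±e_i ± e_j : 1 ≤ i < j ≤ l} ∪ {±e_i : l < i ≤ r} ∪ {±e_i ± e_j : l < i < j ≤ r}; that is, Σ_Y is C_l (formed by the middle and long roots on the first l coordinates) joined with BC_{r−l} (on the last r−l coordinates). -/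
import Mathlib


open RealInnerProductSpace

/-- **Computation of `Σ_Y` for `Δ = BC_r` (`r = m + 1`) and `Y = (π/2) αˡ`.**
With the standard basis `e` of `ℝ^r`, `Δ = {±e_i, ±2e_i} ∪ {±e_i ± e_j : i < j}`, simple
roots `α_i = e_i − e_{i+1}` (for `i < r − 1`) and `α_{r−1} = e_{r−1}` (0-based), and
`d = αˡ` the dual vector of the simple root with 0-based index `l`, we have
`Σ_Y = {±2e_i : all i} ∪ {±e_i ± e_j : i < j ≤ l} ∪ {±e_i : l < i} ∪
{±e_i ± e_j : l < i < j}`, i.e. `C_{l+1}` (middle and long roots on the first `l+1`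
coordinates) joined with `BC_{r−l−1}` on the remaining coordinates. -/
theorem stmt_11 (m : ℕ)
    (e : Fin (m + 1) → EuclideanSpace ℝ (Fin (m + 1)))
    (he : ∀ i, e i = EuclideanSpace.single i (1 : ℝ))
    (Δ : Set (EuclideanSpace ℝ (Fin (m + 1))))
    (hΔ : Δ = {v | ∃ (s : ℝ) (i : Fin (m + 1)),
        (s = 1 ∨ s = -1 ∨ s = 2 ∨ s = -2) ∧ v = s • e i} ∪
      {v | ∃ (s t : ℝ) (i j : Fin (m + 1)), (s = 1 ∨ s = -1) ∧ (t = 1 ∨ t = -1) ∧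
        i < j ∧ v = s • e i + t • e j})
    (α : Fin (m + 1) → EuclideanSpace ℝ (Fin (m + 1)))
    (hα : ∀ i : Fin m, α i.castSucc = e i.castSucc - e i.succ)
    (hαlast : α (Fin.last m) = e (Fin.last m))
    (l : Fin (m + 1))
    (d : EuclideanSpace ℝ (Fin (m + 1)))
    (hd : ∀ j, ⟪d, α j⟫ = if j = l then 1 else 0)
    (Y : EuclideanSpace ℝ (Fin (m + 1))) (hY : Y = (Real.pi / 2) • d) :
    {lam | lam ∈ Δ ∧ ∃ k : ℤ, ⟪lam, Y⟫ = (k : ℝ) * Real.pi} =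
      {v | ∃ (s : ℝ) (i : Fin (m + 1)), (s = 2 ∨ s = -2) ∧ v = s • e i} ∪
      {v | ∃ (s t : ℝ) (i j : Fin (m + 1)), (s = 1 ∨ s = -1) ∧ (t = 1 ∨ t = -1) ∧
        i < j ∧ (j : ℕ) ≤ (l : ℕ) ∧ v = s • e i + t • e j} ∪
      {v | ∃ (s : ℝ) (i : Fin (m + 1)), (s = 1 ∨ s = -1) ∧ (l : ℕ) < (i : ℕ) ∧
        v = s • e i} ∪
      {v | ∃ (s t : ℝ) (i j : Fin (m + 1)), (s = 1 ∨ s = -1) ∧ (t = 1 ∨ t = -1) ∧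
        (l : ℕ) < (i : ℕ) ∧ i < j ∧ v = s • e i + t • e j} := by
  have hπ := Real.pi_ne_zero
  have key : ∀ (a : ℝ) (k : ℤ), a * (Real.pi / 2) = (k : ℝ) * Real.pi → a = 2 * k := by
    intro a k h
    have h2 : a * Real.pi = (2 * (k : ℝ)) * Real.pi := by linear_combination 2 * h
    exact mul_right_cancel₀ hπ h2
  have hc : ∀ i : Fin (m + 1), ⟪d, e i⟫ = if (i : ℕ) ≤ (l : ℕ) then 1 else 0 := by
    intro i
    induction i using Fin.reverseInduction with
    | last =>
      have h := hd (Fin.last m)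
      rw [hαlast] at h
      rw [h]
      have hl := l.isLt
      by_cases hE : Fin.last m = l
      · rw [if_pos hE, if_pos (by rw [hE])]
      · rw [if_neg hE, if_neg]
        intro hle
        apply hE
        rw [Fin.ext_iff, Fin.val_last]
        simp only [Fin.val_last] at hle
        omega
    | cast i ih =>
      have h := hd i.castSucc
      rw [hα i, inner_sub_right] at h
      have e1 : ⟪d, e i.castSucc⟫ = (if i.castSucc = l then 1 else 0) + ⟪d, e i.succ⟫ := by
        linarith
      rw [e1, ih]
      simp only [Fin.ext_iff, Fin.coe_castSucc, Fin.val_succ]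
      split_ifs <;> first | omega | norm_num
  have hin1 : ∀ (s : ℝ) (i : Fin (m + 1)),
      ⟪s • e i, Y⟫ = s * (if (i : ℕ) ≤ (l : ℕ) then 1 else 0) * (Real.pi / 2) := by
    intro s i
    rw [hY, real_inner_smul_left, real_inner_smul_right, real_inner_comm, hc]
    ring
  have hin2 : ∀ (s t : ℝ) (i j : Fin (m + 1)),
      ⟪s • e i + t • e j, Y⟫ =
        (s * (if (i : ℕ) ≤ (l : ℕ) then 1 else 0) +
          t * (if (j : ℕ) ≤ (l : ℕ) then 1 else 0)) * (Real.pi / 2) := by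
    intro s t i j
    rw [inner_add_left, hin1, hin1]
    ring
  ext v
  simp only [Set.mem_setOf_eq, Set.mem_union, hΔ]
  constructor
  · rintro ⟨hv, k, hk⟩
    rcases hv with ⟨s, i, hs, rfl⟩ | ⟨s, t, i, j, hs, ht, hij, rfl⟩
    · rw [hin1] at hk
      by_cases hi : (i : ℕ) ≤ (l : ℕ)
      · rw [if_pos hi] at hk
        rcases hs with rfl | rfl | rfl | rfl
        · exfalso
          have h2 := key _ _ hk
          have h3 : (1 : ℤ) = 2 * k := by exact_mod_cast (by linarith : (1 : ℝ) = 2 * k)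
          omega
        · exfalso
          have h2 := key _ _ hk
          have h3 : (-1 : ℤ) = 2 * k := by exact_mod_cast (by linarith : (-1 : ℝ) = 2 * k)
          omega
        · exact Or.inl (Or.inl (Or.inl ⟨2, i, Or.inl rfl, rfl⟩))
        · exact Or.inl (Or.inl (Or.inl ⟨-2, i, Or.inr rfl, rfl⟩))
      · rcases hs with rfl | rfl | rfl | rfl
        · exact Or.inl (Or.inr ⟨1, i, Or.inl rfl, by omega, rfl⟩)
        · exact Or.inl (Or.inr ⟨-1, i, Or.inr rfl, by omega, rfl⟩)
        · exact Or.inl (Or.inl (Or.inl ⟨2, i, Or.inl rfl, rfl⟩))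
        · exact Or.inl (Or.inl (Or.inl ⟨-2, i, Or.inr rfl, rfl⟩))
    · rw [hin2] at hk
      by_cases hj : (j : ℕ) ≤ (l : ℕ)
      · exact Or.inl (Or.inl (Or.inr ⟨s, t, i, j, hs, ht, hij, hj, rfl⟩))
      · by_cases hi : (i : ℕ) ≤ (l : ℕ)
        · exfalso
          rw [if_pos hi, if_neg hj] at hk
          have h2 := key _ _ hk
          rcases hs with rfl | rfl
          · have h3 : (1 : ℤ) = 2 * k := by
              exact_mod_cast (by linarith : (1 : ℝ) = 2 * k)
            omega
          · have h3 : (-1 : ℤ) = 2 * k := by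
              exact_mod_cast (by linarith : (-1 : ℝ) = 2 * k)
            omega
        · have hij' : (i : ℕ) < (j : ℕ) := hij
          exact Or.inr ⟨s, t, i, j, hs, ht, by omega, hij, rfl⟩
  · rintro (((⟨s, i, hs, rfl⟩ | ⟨s, t, i, j, hs, ht, hij, hjl, rfl⟩) |
      ⟨s, i, hs, hli, rfl⟩) | ⟨s, t, i, j, hs, ht, hli, hij, rfl⟩)
    · refine ⟨Or.inl ⟨s, i, by tauto, rfl⟩, ?_⟩
      rw [hin1]
      by_cases hi : (i : ℕ) ≤ (l : ℕ)
      · rw [if_pos hi]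
        rcases hs with rfl | rfl
        · exact ⟨1, by push_cast; ring⟩
        · exact ⟨-1, by push_cast; ring⟩
      · rw [if_neg hi]
        exact ⟨0, by push_cast; ring⟩
    · refine ⟨Or.inr ⟨s, t, i, j, hs, ht, hij, rfl⟩, ?_⟩
      have hij' : (i : ℕ) < (j : ℕ) := hij
      rw [hin2, if_pos (by omega), if_pos hjl]
      rcases hs with rfl | rfl <;> rcases ht with rfl | rfl
      · exact ⟨1, by push_cast; ring⟩
      · exact ⟨0, by push_cast; ring⟩
      · exact ⟨0, by push_cast; ring⟩
      · exact ⟨-1, by push_cast; ring⟩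
    · refine ⟨Or.inl ⟨s, i, by tauto, rfl⟩, ?_⟩
      rw [hin1, if_neg (by omega)]
      exact ⟨0, by push_cast; ring⟩
    · refine ⟨Or.inr ⟨s, t, i, j, hs, ht, hij, rfl⟩, ?_⟩
      have hij' : (i : ℕ) < (j : ℕ) := hij
      rw [hin2, if_neg (by omega), if_neg (by omega)]
      exact ⟨0, by push_cast; ring⟩
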